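/- Let n ≥ 2 be an integer and let f₁(r) = −1 + Σ_{m=1}^∞ [m·(2m−2)! / (2^{3m−1}·(m!)²·∏_{j=0}^{m−1}(n+2j))]·r^{2m}. Then the integral ∫₀^∞ rⁿ·f₁(r)²·e^{−r²/4} dr diverges (equals +∞). -/

import Mathlib

open MeasureTheory

noncomputable def hplaneCoef (n m : ℕ) : ℝ :=
  ((m : ℝ) * (Nat.factorial (2*m - 2) : ℝ)) /
    ((2:ℝ)^(3*m - 1) * ((Nat.factorial m : ℝ))^2 *
      ∏ j ∈ Finset.range m, ((n : ℝ) + 2*(j : ℝ)))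

noncomputable def fOne (n : ℕ) (r : ℝ) : ℝ :=
  -1 + ∑' m : ℕ, hplaneCoef n (m+1) * r^(2*(m+1))

open Filter Real

/-! ### Auxiliary lemmas -/

noncomputable def lowBnd (p : ℕ) (x : ℝ) : ℝ :=
  ((p+1).factorial : ℝ)/4 / x^(p+3) *
    (Real.exp x - ∑ j ∈ Finset.range (p+4), x^j / (j.factorial : ℝ)) - 1

theorem pow_id (k : ℕ) : ((1:ℝ)/4)^(k+1) * ((2:ℝ)^(3*k+2) * 2^(k+1)) = 2 * 4^k := by
  field_simp
  rw [show (4:ℝ) = 2^2 by norm_num, ← pow_mul, div_pow, one_pow, ← pow_mul, div_mul_eq_mul_div,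
    div_mul_eq_mul_div, div_eq_iff (by positivity)]
  ring

theorem fact_up (k : ℕ) : (((2*k).factorial : ℕ) : ℝ) ≤ 4^k * ((k.factorial : ℕ) : ℝ)^2 := by
  induction k with
  | zero => simp
  | succ k ih =>
    have h1 : 2*(k+1) = (2*k+1)+1 := by ring
    rw [h1, Nat.factorial_succ, Nat.factorial_succ, Nat.factorial_succ]
    push_cast
    have hA : (0:ℝ) ≤ 4^k * ((k.factorial : ℕ) : ℝ)^2 := by positivity
    have h2 : (0:ℝ) ≤ (2*(k:ℝ)+1+1)*(2*k+1) := by positivity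
    calc (2*(k:ℝ)+1+1) * ((2*(k:ℝ)+1) * ((2*k).factorial : ℝ))
        ≤ (2*(k:ℝ)+1+1) * ((2*(k:ℝ)+1) * (4^k * ((k.factorial : ℕ) : ℝ)^2)) := by
          gcongr
      _ ≤ 4^(k+1) * (((k:ℝ)+1) * (k.factorial : ℝ))^2 := by
          have e : (4:ℝ)^(k+1) * (((k:ℝ)+1)*(k.factorial:ℝ))^2
              = 4*((k:ℝ)+1)^2 * (4^k * ((k.factorial : ℕ) : ℝ)^2) := by
            rw [pow_succ 4 k]; ring
          rw [e]
          nlinarith [mul_le_mul_of_nonneg_right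
            (show (2*(k:ℝ)+1+1)*(2*(k:ℝ)+1) ≤ 4*((k:ℝ)+1)^2 by nlinarith) hA]

theorem fact_lo (k : ℕ) : (4:ℝ)^k * ((k.factorial : ℕ) : ℝ)^2 ≤ (2*k+1) * (((2*k).factorial : ℕ) : ℝ) := by
  induction k with
  | zero => simp
  | succ k ih =>
    have h1 : 2*(k+1) = (2*k+1)+1 := by ring
    rw [h1, Nat.factorial_succ, Nat.factorial_succ, Nat.factorial_succ]
    push_cast
    have hA : (0:ℝ) ≤ ((2*k).factorial : ℝ) := by positivity
    calc (4:ℝ)^(k+1) * (((k:ℝ)+1) * (k.factorial : ℝ))^2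
        = 4*((k:ℝ)+1)^2 * (4^k * ((k.factorial : ℕ) : ℝ)^2) := by rw [pow_succ 4 k]; ring
      _ ≤ 4*((k:ℝ)+1)^2 * ((2*(k:ℝ)+1) * ((2*k).factorial : ℝ)) := by gcongr
      _ ≤ (2*((k:ℝ)+1)+1) * ((2*(k:ℝ)+1+1) * ((2*(k:ℝ)+1) * ((2*k).factorial : ℝ))) := by
          nlinarith [mul_le_mul_of_nonneg_right
            (show 4*((k:ℝ)+1)^2 ≤ (2*((k:ℝ)+1)+1)*(2*(k:ℝ)+1+1) by nlinarith)
            (mul_nonneg (by positivity : (0:ℝ) ≤ 2*(k:ℝ)+1) hA)]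

theorem P_pos (n m : ℕ) (hn : 2 ≤ n) : 0 < ∏ j ∈ Finset.range m, ((n : ℝ) + 2*(j:ℝ)) := by
  apply Finset.prod_pos
  intro j _
  have : (2:ℝ) ≤ n := by exact_mod_cast hn
  positivity

theorem P_lo (n m : ℕ) (hn : 2 ≤ n) :
    (2:ℝ)^m * (m.factorial : ℝ) ≤ ∏ j ∈ Finset.range m, ((n : ℝ) + 2*(j:ℝ)) := by
  induction m with
  | zero => simp
  | succ m ih =>
    rw [Finset.prod_range_succ, Nat.factorial_succ]
    push_cast
    have hn' : (2:ℝ) ≤ n := by exact_mod_cast hn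
    have h1 : (2:ℝ)^(m+1) * (((m:ℝ)+1) * (m.factorial : ℝ))
        = (2^m * (m.factorial : ℝ)) * (2*((m:ℝ)+1)) := by rw [pow_succ]; ring
    rw [h1]
    have h2 : (2:ℝ)*((m:ℝ)+1) ≤ (n:ℝ) + 2*m := by linarith
    have h3 : (0:ℝ) ≤ 2^m * (m.factorial : ℝ) := by positivity
    have h4 : 0 < ∏ j ∈ Finset.range m, ((n : ℝ) + 2*(j:ℝ)) := P_pos n m hn
    calc (2^m * (m.factorial : ℝ)) * (2*((m:ℝ)+1))
        ≤ (∏ j ∈ Finset.range m, ((n : ℝ) + 2*(j:ℝ))) * (2*((m:ℝ)+1)) := by gcongr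
      _ ≤ (∏ j ∈ Finset.range m, ((n : ℝ) + 2*(j:ℝ))) * ((n:ℝ) + 2*m) := by gcongr

theorem P_up (n m : ℕ) :
    ∏ j ∈ Finset.range m, ((n : ℝ) + 2*(j:ℝ)) ≤ 2^m * ∏ j ∈ Finset.range m, ((n : ℝ) + (j:ℝ)) := by
  have h : (2:ℝ)^m * ∏ j ∈ Finset.range m, ((n : ℝ) + (j:ℝ))
      = ∏ j ∈ Finset.range m, (2*((n : ℝ) + (j:ℝ))) := by
    rw [Finset.prod_mul_distrib, Finset.prod_const, Finset.card_range]
  rw [h]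
  apply Finset.prod_le_prod
  · intro j _; positivity
  · intro j _; linarith [Nat.cast_nonneg (α := ℝ) n, Nat.cast_nonneg (α := ℝ) j]

theorem Qfact (p : ℕ) : ∀ m : ℕ,
    ((p+1).factorial : ℝ) * ∏ j ∈ Finset.range m, (((p:ℝ)+2) + (j:ℝ)) = ((p+1+m).factorial : ℝ) := by
  intro m; induction m with
  | zero => simp
  | succ m ih =>
    rw [Finset.prod_range_succ, ← mul_assoc, ih, show p+1+(m+1) = (p+1+m)+1 by ring,
      Nat.factorial_succ]
    push_cast; ring

theorem P_up' (p m : ℕ) :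
    ∏ j ∈ Finset.range m, (((p+2:ℕ) : ℝ) + 2*(j:ℝ))
      ≤ 2^m * ∏ j ∈ Finset.range m, (((p:ℝ)+2) + (j:ℝ)) := by
  have h := P_up (p+2) m
  have he : ∏ j ∈ Finset.range m, (((p+2:ℕ) : ℝ) + (j:ℝ))
      = ∏ j ∈ Finset.range m, (((p:ℝ)+2) + (j:ℝ)) :=
    Finset.prod_congr rfl (fun j _ => by push_cast; ring)
  rw [he] at h
  exact h

theorem coef_up (p k : ℕ) :
    hplaneCoef (p+2) (k+1) ≤ (1/4)^(k+1) / ((k+1).factorial : ℝ) := by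
  have hP := P_lo (p+2) (k+1) (by omega)
  have hPpos := P_pos (p+2) (k+1) (by omega)
  set P := ∏ j ∈ Finset.range (k+1), (((p+2:ℕ) : ℝ) + 2*(j:ℝ)) with hPdef
  simp only [hplaneCoef, show 2*(k+1)-2 = 2*k by omega, show 3*(k+1)-1 = 3*k+2 by omega]
  rw [div_le_div_iff₀ (by positivity) (by positivity)]
  have hf : ((k+1).factorial : ℝ) = ((k:ℝ)+1) * (k.factorial : ℝ) := by
    rw [Nat.factorial_succ]; push_cast; ring
  have e : (1/4:ℝ)^(k+1) * (2^(3*k+2) * (((k:ℝ)+1) * (k.factorial : ℝ))^2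
        * (2^(k+1) * (((k:ℝ)+1) * (k.factorial : ℝ))))
      = (2*4^k) * (((k:ℝ)+1)^3 * ((k.factorial : ℝ))^3) := by
    rw [← pow_id k]; ring
  calc ((k+1:ℕ):ℝ) * (((2*k).factorial : ℕ) : ℝ) * ((k+1).factorial : ℝ)
      ≤ ((k+1:ℕ):ℝ) * (4^k * ((k.factorial : ℕ) : ℝ)^2) * ((k+1).factorial : ℝ) := by
        gcongr
        exact fact_up k
    _ ≤ (1/4)^(k+1) * (2^(3*k+2) * (((k+1).factorial : ℝ))^2 * (2^(k+1) * ((k+1).factorial : ℝ))) := by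
        rw [hf]; push_cast
        rw [e]
        nlinarith [pow_pos (show (0:ℝ) < 4 by norm_num) k,
          (Nat.cast_pos (α := ℝ)).mpr (Nat.factorial_pos k),
          mul_le_mul_of_nonneg_right (show ((k:ℝ)+1)^2 ≤ 2*((k:ℝ)+1)^3 by nlinarith)
            (show (0:ℝ) ≤ 4^k * ((k.factorial : ℝ))^3 by positivity)]
    _ ≤ (1/4)^(k+1) * (2^(3*k+2) * (((k+1).factorial : ℝ))^2 * P) := by gcongr

theorem coef_lo (p k : ℕ) :
    ((p+1).factorial : ℝ)/4 * (1/4)^(k+1) / ((k + (p+4)).factorial : ℝ)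
      ≤ hplaneCoef (p+2) (k+1) := by
  have hPup := P_up' p (k+1)
  have hPpos := P_pos (p+2) (k+1) (by omega)
  have hQpos : 0 < ∏ j ∈ Finset.range (k+1), (((p:ℝ)+2) + (j:ℝ)) := by
    apply Finset.prod_pos; intro j _; positivity
  set P := ∏ j ∈ Finset.range (k+1), (((p+2:ℕ) : ℝ) + 2*(j:ℝ)) with hPdef
  set Q := ∏ j ∈ Finset.range (k+1), (((p:ℝ)+2) + (j:ℝ)) with hQdef
  simp only [hplaneCoef, show 2*(k+1)-2 = 2*k by omega, show 3*(k+1)-1 = 3*k+2 by omega]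
  rw [div_le_div_iff₀ (by positivity) (by positivity)]
  have hQf : ((p+1).factorial : ℝ) * Q = ((p+1+(k+1)).factorial : ℝ) := Qfact p (k+1)
  have hfs : ((k + (p+4)).factorial : ℝ)
      = (((p:ℝ)+(k:ℝ)+4)) * (((p:ℝ)+(k:ℝ)+3) * ((p+1+(k+1)).factorial : ℝ)) := by
    rw [show k + (p+4) = ((p+1+(k+1))+1)+1 by omega, Nat.factorial_succ, Nat.factorial_succ]
    push_cast; ring
  have hf : ((k+1).factorial : ℝ) = ((k:ℝ)+1) * (k.factorial : ℝ) := by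
    rw [Nat.factorial_succ]; push_cast; ring
  have hkf : (0:ℝ) < (k.factorial : ℝ) := by exact_mod_cast Nat.factorial_pos k
  have hDpos : (0:ℝ) < ((p+1+(k+1)).factorial : ℝ) := by exact_mod_cast Nat.factorial_pos _
  have hBpos : (0:ℝ) < (((2*k).factorial : ℕ) : ℝ) := by exact_mod_cast Nat.factorial_pos _
  calc ((p+1).factorial : ℝ)/4 * (1/4)^(k+1) * (2^(3*k+2) * (((k+1).factorial : ℝ))^2 * P)
      ≤ ((p+1).factorial : ℝ)/4 * (1/4)^(k+1) * (2^(3*k+2) * (((k+1).factorial : ℝ))^2 * (2^(k+1) * Q)) := by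
        gcongr
    _ = (4:ℝ)^k/2 * (((k:ℝ)+1) * (k.factorial : ℝ))^2 * (((p+1).factorial : ℝ) * Q) := by
        rw [hf]
        have e2 : ((p+1).factorial : ℝ)/4 * (1/4)^(k+1) * (2^(3*k+2)
              * (((k:ℝ)+1) * (k.factorial : ℝ))^2 * (2^(k+1) * Q))
            = ((1/4:ℝ)^(k+1) * ((2:ℝ)^(3*k+2) * 2^(k+1)))
              * (((p+1).factorial : ℝ)/4 * (((k:ℝ)+1) * (k.factorial : ℝ))^2 * Q) := by ring
        rw [e2, pow_id k]; ring
    _ = (4:ℝ)^k/2 * (((k:ℝ)+1) * (k.factorial : ℝ))^2 * ((p+1+(k+1)).factorial : ℝ) := by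
        rw [hQf]
    _ ≤ ((k+1:ℕ):ℝ) * (((2*k).factorial : ℕ) : ℝ) * ((k + (p+4)).factorial : ℝ) := by
        rw [hfs]
        push_cast
        nlinarith [mul_le_mul_of_nonneg_right (fact_lo k)
            (show (0:ℝ) ≤ ((k:ℝ)+1)^2 * ((p+1+(k+1)).factorial : ℝ)/2 by positivity),
          mul_le_mul_of_nonneg_right
            (show (2*(k:ℝ)+1)*((k:ℝ)+1) ≤ 2*((p:ℝ)+(k:ℝ)+3)*((p:ℝ)+(k:ℝ)+4) by
              nlinarith [Nat.cast_nonneg (α := ℝ) p, Nat.cast_nonneg (α := ℝ) k])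
            (mul_nonneg (mul_nonneg (le_of_lt hBpos) (le_of_lt hDpos))
              (by positivity : (0:ℝ) ≤ ((k:ℝ)+1)/2))]

theorem exp_tsum (x : ℝ) : Real.exp x = ∑' j : ℕ, x^j / (j.factorial : ℝ) := by
  rw [Real.exp_eq_exp_ℝ, NormedSpace.exp_eq_tsum_div]

theorem coef_nonneg (p k : ℕ) : 0 ≤ hplaneCoef (p+2) (k+1) := by
  have hP := P_pos (p+2) (k+1) (by omega)
  apply div_nonneg
  · positivity
  · have h1 : (0:ℝ) < (2:ℝ)^(3*(k+1)-1) * (((k+1).factorial : ℝ))^2 := by positivity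
    exact le_of_lt (mul_pos h1 hP)

set_option maxHeartbeats 1000000 in
theorem fOne_lower' (p : ℕ) (x : ℝ) (hx : 0 < x) (r : ℝ) (hrx : r^2 = 4*x) :
    lowBnd p x ≤ fOne (p+2) r := by
  have hg : Summable (fun j : ℕ => x^j / (j.factorial : ℝ)) :=
    Real.summable_pow_div_factorial x
  have hgshift : Summable (fun k : ℕ => x^(k+(p+4)) / ((k+(p+4)).factorial : ℝ)) :=
    (summable_nat_add_iff (p+4)).2 hg
  have hg1 : Summable (fun k : ℕ => x^(k+1) / ((k+1).factorial : ℝ)) :=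
    (summable_nat_add_iff 1).2 hg
  set c : ℝ := ((p+1).factorial : ℝ)/4 / x^(p+3) with hcdef
  have hc : 0 ≤ c := by positivity
  have hrsq : ∀ k : ℕ, r^(2*(k+1)) = 4^(k+1) * x^(k+1) := by
    intro k; rw [pow_mul, hrx, mul_pow]
  have hub : ∀ k : ℕ, hplaneCoef (p+2) (k+1) * r^(2*(k+1)) ≤ x^(k+1) / ((k+1).factorial : ℝ) := by
    intro k
    have h1 := mul_le_mul_of_nonneg_right (coef_up p k)
      (by rw [hrsq k]; positivity : (0:ℝ) ≤ r^(2*(k+1)))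
    refine h1.trans_eq ?_
    rw [hrsq k, div_mul_eq_mul_div, ← mul_assoc, ← mul_pow]
    norm_num
  have hnn : ∀ k : ℕ, 0 ≤ hplaneCoef (p+2) (k+1) * r^(2*(k+1)) := by
    intro k
    have : (0:ℝ) ≤ r^(2*(k+1)) := by rw [hrsq k]; positivity
    exact mul_nonneg (coef_nonneg p k) this
  have hu_sum : Summable (fun k => hplaneCoef (p+2) (k+1) * r^(2*(k+1))) :=
    Summable.of_nonneg_of_le hnn hub hg1
  have hlb : ∀ k : ℕ, c * (x^(k+(p+4)) / ((k+(p+4)).factorial : ℝ))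
      ≤ hplaneCoef (p+2) (k+1) * r^(2*(k+1)) := by
    intro k
    have h1 := mul_le_mul_of_nonneg_right (coef_lo p k)
      (by rw [hrsq k]; positivity : (0:ℝ) ≤ r^(2*(k+1)))
    refine (le_of_eq ?_).trans h1
    rw [hrsq k, hcdef]
    have hxides : x^(k + (p+4)) = x^(p+3) * x^(k+1) := by rw [← pow_add]; congr 1; omega
    rw [hxides]
    have hfne : ((k+(p+4)).factorial : ℝ) ≠ 0 := by
      exact_mod_cast (Nat.factorial_pos _).ne'
    field_simp
    ring_nf
    rw [← mul_pow]; norm_num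
  calc lowBnd p x
      = c * (Real.exp x - ∑ j ∈ Finset.range (p+4), x^j / (j.factorial : ℝ)) - 1 := rfl
    _ = -1 + c * ∑' k : ℕ, x^(k+(p+4)) / ((k+(p+4)).factorial : ℝ) := by
        have hs := Summable.sum_add_tsum_nat_add (f := fun j : ℕ => x^j / (j.factorial : ℝ)) (p+4) hg
        rw [exp_tsum x, ← hs]; ring
    _ = -1 + ∑' k : ℕ, c * (x^(k+(p+4)) / ((k+(p+4)).factorial : ℝ)) := by rw [tsum_mul_left]
    _ ≤ -1 + ∑' k, hplaneCoef (p+2) (k+1) * r^(2*(k+1)) := by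
        gcongr -1 + ?_
        exact Summable.tsum_le_tsum hlb (hgshift.mul_left c) hu_sum
    _ = fOne (p+2) r := rfl

theorem tend_lowBnd (p : ℕ) :
    Tendsto (fun x : ℝ => lowBnd p x * Real.exp (-x/2)) atTop atTop := by
  set C : ℝ := ((p+1).factorial : ℝ)/4 with hC
  have hCpos : 0 < C := by positivity
  have hhalf : Tendsto (fun x : ℝ => x/2) atTop atTop :=
    tendsto_id.atTop_div_const (by norm_num)
  have hmain0 : Tendsto (fun x : ℝ => Real.exp (x/2) / (x/2)^(p+3)) atTop atTop :=
    (Real.tendsto_exp_div_pow_atTop (p+3)).comp hhalf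
  have hmain1 : Tendsto (fun x : ℝ => (C/2^(p+3)) * (Real.exp (x/2) / (x/2)^(p+3))) atTop atTop :=
    hmain0.const_mul_atTop (by positivity)
  have hmain : Tendsto (fun x : ℝ => C * Real.exp (x/2) / x^(p+3)) atTop atTop := by
    refine hmain1.congr' ?_
    filter_upwards [eventually_gt_atTop (0:ℝ)] with x hx
    rw [div_pow]
    field_simp
  have hexpneg : Tendsto (fun x : ℝ => Real.exp (-x/2)) atTop (nhds 0) := by
    refine Real.tendsto_exp_atBot.comp ?_
    exact (tendsto_neg_atTop_atBot.comp hhalf).congr fun x => (neg_div _ _).symm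
  have herr2 : Tendsto (fun x : ℝ =>
      C * ((∑ j ∈ Finset.range (p+4), x^j / (j.factorial : ℝ)) * Real.exp (-x/2) / x^(p+3)))
      atTop (nhds 0) := by
    have hub : ∀ᶠ x : ℝ in atTop,
        C * ((∑ j ∈ Finset.range (p+4), x^j / (j.factorial : ℝ)) * Real.exp (-x/2) / x^(p+3))
        ≤ C * ((p+4) * Real.exp (-x/2)) := by
      filter_upwards [eventually_ge_atTop (1:ℝ)] with x hx
      have hx0 : 0 < x := by linarith
      have hsum : (∑ j ∈ Finset.range (p+4), x^j / (j.factorial : ℝ)) ≤ (p+4) * x^(p+3) := by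
        calc (∑ j ∈ Finset.range (p+4), x^j / (j.factorial : ℝ))
            ≤ ∑ j ∈ Finset.range (p+4), x^(p+3) := by
              apply Finset.sum_le_sum
              intro j hj
              have h1 : x^j ≤ x^(p+3) := by
                apply pow_le_pow_right₀ hx
                simp only [Finset.mem_range] at hj; omega
              have h2 : (1:ℝ) ≤ (j.factorial : ℝ) := by
                exact_mod_cast Nat.one_le_iff_ne_zero.2 (Nat.factorial_pos j).ne'
              calc x^j / (j.factorial : ℝ) ≤ x^j / 1 := by
                    apply div_le_div_of_nonneg_left (by positivity) (by norm_num) h2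
                _ = x^j := by ring
                _ ≤ x^(p+3) := h1
          _ = (p+4) * x^(p+3) := by
              rw [Finset.sum_const, Finset.card_range]; push_cast; ring
      have he : 0 < Real.exp (-x/2) := Real.exp_pos _
      have hxp : 0 < x^(p+3) := by positivity
      gcongr
      calc (∑ j ∈ Finset.range (p+4), x^j / (j.factorial : ℝ)) * Real.exp (-x/2) / x^(p+3)
          ≤ ((p+4) * x^(p+3)) * Real.exp (-x/2) / x^(p+3) := by gcongr
        _ = (p+4) * Real.exp (-x/2) := by field_simp
    have hlb : ∀ᶠ x : ℝ in atTop,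
        0 ≤ C * ((∑ j ∈ Finset.range (p+4), x^j / (j.factorial : ℝ)) * Real.exp (-x/2) / x^(p+3)) := by
      filter_upwards [eventually_gt_atTop (0:ℝ)] with x hx
      have : 0 ≤ ∑ j ∈ Finset.range (p+4), x^j / (j.factorial : ℝ) := by
        apply Finset.sum_nonneg; intro j _; positivity
      positivity
    have hg0 : Tendsto (fun x : ℝ => C * ((p+4) * Real.exp (-x/2))) atTop (nhds 0) := by
      have := (hexpneg.const_mul ((p:ℝ)+4)).const_mul C
      simpa using this
    exact squeeze_zero' hlb hub hg0
  have heq : ∀ᶠ x : ℝ in atTop, lowBnd p x * Real.exp (-x/2)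
      = C * Real.exp (x/2) / x^(p+3)
        + (-(C * ((∑ j ∈ Finset.range (p+4), x^j / (j.factorial : ℝ)) * Real.exp (-x/2) / x^(p+3)))
           + -(Real.exp (-x/2))) := by
    filter_upwards [eventually_gt_atTop (0:ℝ)] with x hx
    unfold lowBnd
    rw [← hC]
    have hid : Real.exp x * Real.exp (-x/2) = Real.exp (x/2) := by
      rw [← Real.exp_add]; congr 1; ring
    linear_combination (C / x^(p+3)) * hid
  have hsum0 : Tendsto (fun x : ℝ =>
      -(C * ((∑ j ∈ Finset.range (p+4), x^j / (j.factorial : ℝ)) * Real.exp (-x/2) / x^(p+3)))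
        + -(Real.exp (-x/2))) atTop (nhds 0) := by
    have := (herr2.neg).add (hexpneg.neg)
    simpa using this
  have hmain' : Tendsto (fun x : ℝ => C * Real.exp (x/2) / x^(p+3) + (-1)) atTop atTop :=
    tendsto_atTop_add_const_right _ (-1) hmain
  have hfin : Tendsto (fun x : ℝ => lowBnd p x * Real.exp (-x/2)) atTop atTop := by
    apply tendsto_atTop_mono' _ _ hmain'
    filter_upwards [heq, hsum0.eventually (eventually_gt_nhds (show (-1:ℝ) < 0 by norm_num))]
      with x h1 h2
    rw [h1]
    gcongr
  exact hfin

/-- The integral `∫₀^∞ rⁿ f₁(r)² e^{−r²/4} dr` diverges. -/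
theorem stmt18 (n : ℕ) (hn : 2 ≤ n) :
    ∫⁻ r in Set.Ioi (0:ℝ),
      ENNReal.ofReal (r^n * (fOne n r)^2 * Real.exp (-r^2/4)) = ⊤ := by
  obtain ⟨p, rfl⟩ : ∃ p, n = p + 2 := ⟨n - 2, by omega⟩
  have hcomp : Tendsto (fun r : ℝ => r^2/4) atTop atTop :=
    (tendsto_pow_atTop (two_ne_zero)).atTop_div_const (by norm_num)
  have hev : ∀ᶠ r : ℝ in atTop,
      1 ≤ lowBnd p (r^2/4) * Real.exp (-(r^2/4)/2) :=
    hcomp.eventually ((tend_lowBnd p).eventually_ge_atTop 1)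
  obtain ⟨R, hR⟩ := (hev.and (eventually_ge_atTop (1:ℝ))).exists_forall_of_atTop
  set M : ℝ := max R 1 with hM
  have hM1 : (1:ℝ) ≤ M := le_max_right _ _
  have key : ∀ r ∈ Set.Ioi M, (1:ℝ) ≤ r^(p+2) * (fOne (p+2) r)^2 * Real.exp (-r^2/4) := by
    intro r hrM
    have hrR : R ≤ r := le_trans (le_max_left _ _) (le_of_lt hrM)
    obtain ⟨h1, hr1⟩ := hR r hrR
    have hr0 : (0:ℝ) < r := lt_of_lt_of_le one_pos hr1
    set x : ℝ := r^2/4 with hxdef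
    have hx : 0 < x := by positivity
    have ha : 0 < Real.exp (-x/2) := Real.exp_pos _
    have hLea : Real.exp (-x/2) ≤ 1 := by
      rw [Real.exp_le_one_iff]
      nlinarith
    have hGpos : 0 < lowBnd p x := by nlinarith
    have hG1 : 1 ≤ lowBnd p x :=
      le_trans h1 (mul_le_of_le_one_right (le_of_lt hGpos) hLea)
    have hf : lowBnd p x ≤ fOne (p+2) r := fOne_lower' p x hx r (by rw [hxdef]; ring)
    have hfx1 : 1 ≤ fOne (p+2) r := le_trans hG1 hf
    have hxa : (Real.exp (-x/2))^2 = Real.exp (-r^2/4) := by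
      rw [sq, ← Real.exp_add, hxdef]
      congr 1
      ring
    calc (1:ℝ) = 1^2 := by norm_num
      _ ≤ (lowBnd p x * Real.exp (-x/2))^2 := by
          apply pow_le_pow_left₀ (by norm_num) h1
      _ = (lowBnd p x)^2 * (Real.exp (-x/2))^2 := by ring
      _ = (lowBnd p x)^2 * Real.exp (-r^2/4) := by rw [hxa]
      _ ≤ (fOne (p+2) r)^2 * Real.exp (-r^2/4) := by
          gcongr
      _ ≤ r^(p+2) * ((fOne (p+2) r)^2 * Real.exp (-r^2/4)) := by
          apply le_mul_of_one_le_left (by positivity)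
          exact one_le_pow₀ hr1
      _ = r^(p+2) * (fOne (p+2) r)^2 * Real.exp (-r^2/4) := by ring
  rw [← top_le_iff]
  calc (⊤ : ENNReal) = ∫⁻ _ in Set.Ioi M, (1:ENNReal) := by
        rw [setLIntegral_one, Real.volume_Ioi]
    _ ≤ ∫⁻ r in Set.Ioi M, ENNReal.ofReal (r^(p+2) * (fOne (p+2) r)^2 * Real.exp (-r^2/4)) := by
        apply lintegral_mono_ae
        rw [ae_restrict_iff' measurableSet_Ioi]
        exact ae_of_all _ fun r hr => ENNReal.one_le_ofReal.2 (key r hr)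
    _ ≤ ∫⁻ r in Set.Ioi 0, ENNReal.ofReal (r^(p+2) * (fOne (p+2) r)^2 * Real.exp (-r^2/4)) :=
        lintegral_mono_set (Set.Ioi_subset_Ioi (by linarith))
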